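/- For 0 ≤ i ≤ n ≤ v/2, the vectors v_C = Σ_{|A|=n, A∩C=∅} e_A, indexed by i-element subsets C of {1,...,v}, are linearly independent in ℂ^X where X is the set of n-element subsets of {1,...,v}. Consequently the subspace W_i = span{v_C : |C| = i} ⊖ span{v_C : |C| = i−1} has dimension C(v,i) − C(v,i−1). -/

import Mathlib

open scoped ENNReal ComplexOrder

noncomputable def opNorm2 {m : Type*} [Fintype m] [DecidableEq m] (M : Matrix m m ℂ) : ℝ :=
  ‖Matrix.toEuclideanCLM (𝕜 := ℂ) M‖

noncomputable def schurNorm {m : Type*} [Fintype m] [DecidableEq m] (M : Matrix m m ℂ) : ℝ :=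
  ⨆ X : {X : Matrix m m ℂ // opNorm2 X ≤ 1}, opNorm2 (M.hadamard X.1)

noncomputable def schurNormENN (A : ℕ → ℕ → ℂ) : ℝ≥0∞ :=
  ⨆ n : ℕ, ENNReal.ofReal (schurNorm (Matrix.of fun i j : Fin n => A i j))

noncomputable def schurBound (P : Set (ℕ × ℕ)) : ℝ≥0∞ :=
  ⨆ S : {S : ℕ → ℕ → ℂ //
      (∀ i j, ‖S i j‖ ≤ 1) ∧ ∀ i j, (i, j) ∉ P → S i j = 0},
    schurNormENN S.1

noncomputable def matAbs {m : Type*} [Fintype m] [DecidableEq m] (T : Matrix m m ℂ) :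
    Matrix m m ℂ :=
  (Matrix.posSemidef_conjTranspose_mul_self T).isHermitian.eigenvectorUnitary.1 *
    Matrix.diagonal ((↑) ∘ (Real.sqrt ∘ (Matrix.posSemidef_conjTranspose_mul_self T).isHermitian.eigenvalues)) *
    (star (Matrix.posSemidef_conjTranspose_mul_self T).isHermitian.eigenvectorUnitary : Matrix m m ℂ)

noncomputable def vvec (v n i : ℕ) (C : {C : Finset (Fin v) // C.card = i}) :
    EuclideanSpace ℂ {A : Finset (Fin v) // A.card = n} :=
  WithLp.toLp 2 (fun A => if A.1 ∩ C.1 = ∅ then 1 else 0)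


open Finset


lemma inter_empty_iff_subset_compl {v : ℕ} {A B : Finset (Fin v)} : A ∩ B = ∅ ↔ A ⊆ Bᶜ := by
  rw [← Finset.disjoint_iff_inter_eq_empty, ← le_compl_iff_disjoint_right]

lemma count_disj (v n : ℕ) (B : Finset (Fin v)) :
    ((Finset.univ : Finset {A : Finset (Fin v) // A.card = n}).filter
      (fun A => A.1 ∩ B = ∅)).card = (v - B.card).choose n := by
  have h1 : Bᶜ.card = v - B.card := by rw [Finset.card_compl, Fintype.card_fin]
  rw [← h1, ← Finset.card_powersetCard n Bᶜ]
  apply Finset.card_bij (fun A _ => A.1)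
  · intro A hA
    simp only [Finset.mem_filter] at hA
    exact Finset.mem_powersetCard.2 ⟨inter_empty_iff_subset_compl.1 hA.2, A.2⟩
  · intro a _ b _ h; exact Subtype.ext h
  · intro S hS
    rw [Finset.mem_powersetCard] at hS
    exact ⟨⟨S, hS.2⟩, by
      simp only [Finset.mem_filter, Finset.mem_univ, true_and]
      exact inter_empty_iff_subset_compl.2 hS.1, rfl⟩

lemma gram_nat (v n i : ℕ) (h2i : 2*i ≤ v) (C C' : Finset (Fin v))
    (hC : C.card = i) (hC' : C'.card = i) :
    (v - (C ∪ C').card).choose n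
      = ∑ p ∈ Finset.HasAntidiagonal.antidiagonal n, (v - 2*i).choose p.1 * (powersetCard p.2 (C ∩ C')).card := by
  have hcc : (C ∪ C').card + (C ∩ C').card = 2*i := by
    rw [Finset.card_union_add_card_inter, hC, hC']; ring
  have h3 : v - (C ∪ C').card = (v - 2*i) + (C ∩ C').card := by omega
  rw [h3, Nat.add_choose_eq]
  exact Finset.sum_congr rfl fun p _ => by rw [Finset.card_powersetCard]

lemma sum3 {α β δ M : Type*} [AddCommMonoid M] (s : Finset α) (t : Finset β)
    (w : Finset δ) (f : α → β → δ → M) :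
    ∑ a ∈ s, ∑ b ∈ t, ∑ d ∈ w, f a b d = ∑ d ∈ w, ∑ a ∈ s, ∑ b ∈ t, f a b d :=
  calc ∑ a ∈ s, ∑ b ∈ t, ∑ d ∈ w, f a b d
      = ∑ a ∈ s, ∑ d ∈ w, ∑ b ∈ t, f a b d :=
        Finset.sum_congr rfl fun a _ => Finset.sum_comm
    _ = ∑ d ∈ w, ∑ a ∈ s, ∑ b ∈ t, f a b d := Finset.sum_comm

lemma li_vvec (v n i : ℕ) (hv : 2 * n ≤ v) (hi : i ≤ n) :
    LinearIndependent ℂ (vvec v n i) := by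
  have h2i : 2 * i ≤ v := by omega
  rw [Fintype.linearIndependent_iff]
  intro g hg C₀
  set χ : {A : Finset (Fin v) // A.card = n} → Finset (Fin v) → ℂ :=
    fun A B => if A.1 ∩ B = ∅ then 1 else 0 with hχ
  set u : Finset (Fin v) → {C : Finset (Fin v) // C.card = i} → ℂ :=
    fun S C => if S ⊆ C.1 then 1 else 0 with hu
  set F : {A : Finset (Fin v) // A.card = n} → ℂ :=
    fun A => ∑ C, g C * χ A C.1 with hF
  set β : Finset (Fin v) → ℂ := fun S => ∑ C, g C * u S C with hβ
  have hf : ∀ A, F A = 0 := by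
    intro A
    have h := congrArg (EuclideanSpace.proj (𝕜 := ℂ) A) hg
    rw [map_sum, map_zero] at h
    simpa [hF, hχ, vvec, mul_comm] using h
  have hχconj : ∀ A B, (starRingEnd ℂ) (χ A B) = χ A B := by
    intro A B; simp [hχ, apply_ite]
  have huconj : ∀ S C, (starRingEnd ℂ) (u S C) = u S C := by
    intro S C; simp [hu, apply_ite]
  have hχmul : ∀ A (C C' : Finset (Fin v)), χ A C * χ A C' = χ A (C ∪ C') := by
    intro A C C'
    simp only [hχ, Finset.inter_union_distrib_left, Finset.union_eq_empty]
    by_cases h1 : A.1 ∩ C = ∅ <;> by_cases h2 : A.1 ∩ C' = ∅ <;> simp [h1, h2]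
  have humul : ∀ S (C C' : {C : Finset (Fin v) // C.card = i}),
      u S C * u S C' = if S ⊆ C.1 ∩ C'.1 then 1 else 0 := by
    intro S C C'
    simp only [hu, Finset.subset_inter_iff]
    by_cases h1 : S ⊆ C.1 <;> by_cases h2 : S ⊆ C'.1 <;> simp [h1, h2]
  have hS2 : ∀ B : Finset (Fin v), ∑ A, χ A B = ((v - B.card).choose n : ℂ) := by
    intro B
    rw [hχ, Finset.sum_boole, count_disj]
  have key : (0:ℂ) = ∑ p ∈ Finset.HasAntidiagonal.antidiagonal n, ((v - 2*i).choose p.1 : ℂ) *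
      ∑ S ∈ powersetCard p.2 (univ : Finset (Fin v)),
        (starRingEnd ℂ) (β S) * β S := by
    have e2 : ∀ A, (starRingEnd ℂ) (F A) * F A
        = ∑ C, ∑ C', ((starRingEnd ℂ) (g C) * g C') * χ A (C.1 ∪ C'.1) := by
      intro A
      rw [hF, map_sum, Finset.sum_mul_sum]
      refine Finset.sum_congr rfl fun C _ => Finset.sum_congr rfl fun C' _ => ?_
      rw [map_mul, hχconj, ← hχmul A C.1 C'.1]; ring
    have e3 : ∀ (C C' : {C : Finset (Fin v) // C.card = i}),
        ((v - (C.1 ∪ C'.1).card).choose n : ℂ)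
          = ∑ p ∈ Finset.HasAntidiagonal.antidiagonal n, ((v - 2*i).choose p.1 : ℂ) *
              ∑ S ∈ powersetCard p.2 (univ : Finset (Fin v)), u S C * u S C' := by
      intro C C'
      have hn := gram_nat v n i h2i C.1 C'.1 C.2 C'.2
      have hps : ∀ p2 : ℕ, ((powersetCard p2 (C.1 ∩ C'.1)).card : ℂ)
          = ∑ S ∈ powersetCard p2 (univ : Finset (Fin v)), u S C * u S C' := by
        intro p2
        have hpc : powersetCard p2 (C.1 ∩ C'.1)
            = (powersetCard p2 (univ : Finset (Fin v))).filter (fun S => S ⊆ C.1 ∩ C'.1) := by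
          ext S
          simp [Finset.mem_powersetCard, Finset.mem_filter, and_comm]
        rw [hpc, ← Finset.sum_boole]
        exact Finset.sum_congr rfl fun S _ => (humul S C C').symm
      calc ((v - (C.1 ∪ C'.1).card).choose n : ℂ)
          = ((∑ p ∈ Finset.HasAntidiagonal.antidiagonal n,
              (v - 2*i).choose p.1 * (powersetCard p.2 (C.1 ∩ C'.1)).card : ℕ) : ℂ) :=
            Nat.cast_inj.mpr hn
        _ = ∑ p ∈ Finset.HasAntidiagonal.antidiagonal n, ((v - 2*i).choose p.1 : ℂ) *
              ∑ S ∈ powersetCard p.2 (univ : Finset (Fin v)), u S C * u S C' := by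
            push_cast
            exact Finset.sum_congr rfl fun p _ => by rw [hps p.2]
    calc (0:ℂ) = ∑ A, (starRingEnd ℂ) (F A) * F A := by simp [hf]
      _ = ∑ A, ∑ C, ∑ C', ((starRingEnd ℂ) (g C) * g C') * χ A (C.1 ∪ C'.1) :=
          Finset.sum_congr rfl fun A _ => e2 A
      _ = ∑ C, ∑ C', ∑ A, ((starRingEnd ℂ) (g C) * g C') * χ A (C.1 ∪ C'.1) :=
          (sum3 _ _ _ _).symm
      _ = ∑ C, ∑ C', ∑ p ∈ Finset.HasAntidiagonal.antidiagonal n, ((starRingEnd ℂ) (g C) * g C') *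
            (((v - 2*i).choose p.1 : ℂ) *
              ∑ S ∈ powersetCard p.2 (univ : Finset (Fin v)), u S C * u S C') := by
          refine Finset.sum_congr rfl fun C _ => Finset.sum_congr rfl fun C' _ => ?_
          rw [← Finset.mul_sum, ← Finset.mul_sum, hS2 (C.1 ∪ C'.1), e3 C C']
      _ = ∑ p ∈ Finset.HasAntidiagonal.antidiagonal n, ∑ C, ∑ C', ((starRingEnd ℂ) (g C) * g C') *
            (((v - 2*i).choose p.1 : ℂ) *
              ∑ S ∈ powersetCard p.2 (univ : Finset (Fin v)), u S C * u S C') :=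
          sum3 _ _ _ _
      _ = ∑ p ∈ Finset.HasAntidiagonal.antidiagonal n, ((v - 2*i).choose p.1 : ℂ) *
            ∑ S ∈ powersetCard p.2 (univ : Finset (Fin v)),
              (starRingEnd ℂ) (β S) * β S := by
          refine Finset.sum_congr rfl fun p _ => ?_
          rw [Finset.mul_sum]
          calc ∑ C, ∑ C', ((starRingEnd ℂ) (g C) * g C') *
                (((v - 2*i).choose p.1 : ℂ) *
                  ∑ S ∈ powersetCard p.2 (univ : Finset (Fin v)), u S C * u S C')
              = ∑ C, ∑ C', ∑ S ∈ powersetCard p.2 (univ : Finset (Fin v)),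
                  (((v - 2*i).choose p.1 : ℂ) *
                    (((starRingEnd ℂ) (g C) * u S C) * (g C' * u S C'))) := by
                refine Finset.sum_congr rfl fun C _ => Finset.sum_congr rfl fun C' _ => ?_
                rw [Finset.mul_sum, Finset.mul_sum]
                exact Finset.sum_congr rfl fun S _ => by ring
            _ = ∑ S ∈ powersetCard p.2 (univ : Finset (Fin v)), ∑ C, ∑ C',
                  (((v - 2*i).choose p.1 : ℂ) *
                    (((starRingEnd ℂ) (g C) * u S C) * (g C' * u S C'))) := sum3 _ _ _ _
            _ = ∑ S ∈ powersetCard p.2 (univ : Finset (Fin v)),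
                  ((v - 2*i).choose p.1 : ℂ) * ((starRingEnd ℂ) (β S) * β S) := by
                refine Finset.sum_congr rfl fun S _ => ?_
                rw [hβ]
                simp only
                rw [map_sum, Finset.sum_mul_sum]
                simp only [Finset.mul_sum]
                exact Finset.sum_congr rfl fun C _ => Finset.sum_congr rfl fun C' _ => by
                  rw [map_mul, huconj]
  -- now take real parts
  have key2 : (0:ℝ) = ∑ p ∈ Finset.HasAntidiagonal.antidiagonal n, ((v - 2*i).choose p.1 : ℝ) *
      ∑ S ∈ powersetCard p.2 (univ : Finset (Fin v)), Complex.normSq (β S) := by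
    have : ∀ p ∈ Finset.HasAntidiagonal.antidiagonal n, ((v - 2*i).choose p.1 : ℂ) *
        ∑ S ∈ powersetCard p.2 (univ : Finset (Fin v)), (starRingEnd ℂ) (β S) * β S
        = (((((v - 2*i).choose p.1 : ℝ) *
            ∑ S ∈ powersetCard p.2 (univ : Finset (Fin v)), Complex.normSq (β S)) : ℝ) : ℂ) := by
      intro p _
      push_cast
      congr 1
      exact Finset.sum_congr rfl fun S _ => by
        rw [mul_comm ((starRingEnd ℂ) (β S)), Complex.mul_conj]
    rw [Finset.sum_congr rfl this, ← Complex.ofReal_sum] at key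
    exact_mod_cast key
  have hnonneg : ∀ p ∈ Finset.HasAntidiagonal.antidiagonal n, (0:ℝ) ≤ ((v - 2*i).choose p.1 : ℝ) *
      ∑ S ∈ powersetCard p.2 (univ : Finset (Fin v)), Complex.normSq (β S) := by
    intro p _
    exact mul_nonneg (Nat.cast_nonneg _)
      (Finset.sum_nonneg fun S _ => Complex.normSq_nonneg _)
  have hzero := (Finset.sum_eq_zero_iff_of_nonneg hnonneg).1 key2.symm
  have hmem : ((n - i, i) : ℕ × ℕ) ∈ Finset.HasAntidiagonal.antidiagonal n := by
    rw [Finset.HasAntidiagonal.mem_antidiagonal]; omega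
  have h0 := hzero _ hmem
  simp only at h0
  have hcpos : (0:ℝ) < ((v - 2*i).choose (n - i) : ℝ) := by
    have : n - i ≤ v - 2*i := by omega
    exact_mod_cast Nat.choose_pos this
  have hsum0 : ∑ S ∈ powersetCard i (univ : Finset (Fin v)), Complex.normSq (β S) = 0 := by
    rcases mul_eq_zero.1 h0 with h | h
    · exact absurd h (ne_of_gt hcpos)
    · exact h
  have hSnonneg : ∀ S ∈ powersetCard i (univ : Finset (Fin v)), (0:ℝ) ≤ Complex.normSq (β S) :=
    fun S _ => Complex.normSq_nonneg _
  have hC0mem : C₀.1 ∈ powersetCard i (univ : Finset (Fin v)) :=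
    Finset.mem_powersetCard.2 ⟨Finset.subset_univ _, C₀.2⟩
  have hβ0 : β C₀.1 = 0 := by
    have := (Finset.sum_eq_zero_iff_of_nonneg hSnonneg).1 hsum0 _ hC0mem
    exact Complex.normSq_eq_zero.1 this
  rw [hβ] at hβ0
  simp only at hβ0
  rw [Finset.sum_eq_single C₀] at hβ0
  · rw [hu] at hβ0
    simpa using hβ0
  · intro C _ hne
    rw [hu]
    simp only
    rw [if_neg, mul_zero]
    intro hsub
    exact hne (Subtype.ext ((Finset.eq_of_subset_of_card_le hsub (by rw [C.2, C₀.2])).symm))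
  · intro h; exact absurd (Finset.mem_univ C₀) h


lemma sum_vvec_apply (v n j : ℕ) (s : Finset {C' : Finset (Fin v) // C'.card = j})
    (A : {A : Finset (Fin v) // A.card = n}) :
    (∑ C' ∈ s, vvec v n j C') A
      = ∑ C' ∈ s, (if A.1 ∩ C'.1 = ∅ then (1:ℂ) else 0) :=
  calc (∑ C' ∈ s, vvec v n j C') A
      = EuclideanSpace.proj (𝕜 := ℂ) A (∑ C' ∈ s, vvec v n j C') := rfl
    _ = ∑ C' ∈ s, EuclideanSpace.proj (𝕜 := ℂ) A (vvec v n j C') := map_sum _ _ _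
    _ = ∑ C' ∈ s, (if A.1 ∩ C'.1 = ∅ then (1:ℂ) else 0) := rfl

lemma vvec_rel (v n j : ℕ) (hv : 2 * n ≤ v) (hj : j + 1 ≤ n)
    (C : {C : Finset (Fin v) // C.card = j}) :
    ((v - (n + j) : ℕ) : ℂ) • vvec v n j C
      = ∑ C' ∈ univ.filter (fun C' : {C' : Finset (Fin v) // C'.card = j+1} => C.1 ⊆ C'.1),
          vvec v n (j+1) C' := by
  apply PiLp.ext
  intro A
  rw [sum_vvec_apply, PiLp.smul_apply]
  by_cases hA : A.1 ∩ C.1 = ∅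
  · have hd : Disjoint A.1 C.1 := Finset.disjoint_iff_inter_eq_empty.2 hA
    rw [vvec]
    simp only [hA, if_pos, smul_eq_mul, mul_one]
    rw [Finset.sum_boole, Finset.filter_filter]
    -- now a cardinality statement
    have hcard : (univ.filter (fun C' : {C' : Finset (Fin v) // C'.card = j+1} =>
        C.1 ⊆ C'.1 ∧ A.1 ∩ C'.1 = ∅)).card = v - (n + j) := by
      have hb : (univ.filter (fun C' : {C' : Finset (Fin v) // C'.card = j+1} =>
          C.1 ⊆ C'.1 ∧ A.1 ∩ C'.1 = ∅)).card
            = (powersetCard 1 ((C.1 ∪ A.1)ᶜ)).card := by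
        apply Finset.card_bij (fun C' _ => C'.1 \ C.1)
        · intro C' hC'
          simp only [Finset.mem_filter, Finset.mem_univ, true_and] at hC'
          rw [Finset.mem_powersetCard]
          constructor
          · intro x hx
            rw [Finset.mem_sdiff] at hx
            rw [Finset.mem_compl, Finset.mem_union]
            push_neg
            refine ⟨hx.2, fun hxA => ?_⟩
            have : x ∈ A.1 ∩ C'.1 := Finset.mem_inter.2 ⟨hxA, hx.1⟩
            rw [hC'.2] at this
            exact absurd this (Finset.notMem_empty x)
          · rw [Finset.card_sdiff_of_subset hC'.1, C'.2, C.2]; omega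
        · intro a ha b hb h
          simp only [Finset.mem_filter, Finset.mem_univ, true_and] at ha hb
          apply Subtype.ext
          rw [← Finset.union_sdiff_of_subset ha.1, ← Finset.union_sdiff_of_subset hb.1, h]
        · intro S hS
          rw [Finset.mem_powersetCard] at hS
          have hdisj : Disjoint C.1 S := by
            refine Finset.disjoint_left.2 fun x hxC hxS => ?_
            have := hS.1 hxS
            rw [Finset.mem_compl, Finset.mem_union] at this
            exact this (Or.inl hxC)
          have hdisjA : Disjoint A.1 S := by
            refine Finset.disjoint_left.2 fun x hxA hxS => ?_
            have := hS.1 hxS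
            rw [Finset.mem_compl, Finset.mem_union] at this
            exact this (Or.inr hxA)
          refine ⟨⟨C.1 ∪ S, by rw [Finset.card_union_of_disjoint hdisj, C.2, hS.2]⟩, ?_, ?_⟩
          · simp only [Finset.mem_filter, Finset.mem_univ, true_and]
            refine ⟨Finset.subset_union_left, ?_⟩
            rw [Finset.inter_union_distrib_left, hA, Finset.empty_union,
              ← Finset.disjoint_iff_inter_eq_empty]
            exact hdisjA
          · exact Finset.union_sdiff_cancel_left hdisj
      rw [hb, Finset.card_powersetCard, Nat.choose_one_right, Finset.card_compl,
        Fintype.card_fin, Finset.card_union_of_disjoint hd.symm, C.2, A.2]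
      omega
    rw [hcard]
  · rw [vvec]
    simp only [hA, if_neg, smul_eq_mul, mul_zero, not_false_iff]
    symm
    apply Finset.sum_eq_zero
    intro C' hC'
    simp only [Finset.mem_filter, Finset.mem_univ, true_and] at hC'
    rw [if_neg]
    intro h
    apply hA
    have : A.1 ∩ C.1 ⊆ A.1 ∩ C'.1 := Finset.inter_subset_inter le_rfl hC'
    rw [h] at this
    exact Finset.subset_empty.1 this

lemma vvec_mem_span (v n j : ℕ) (hv : 2 * n ≤ v) (hj : j + 1 ≤ n)
    (C : {C : Finset (Fin v) // C.card = j}) :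
    vvec v n j C ∈ Submodule.span ℂ (Set.range (vvec v n (j+1))) := by
  have hk : ((v - (n + j) : ℕ) : ℂ) ≠ 0 := Nat.cast_ne_zero.2 (by omega)
  have h := vvec_rel v n j hv hj C
  have h2 : vvec v n j C = ((v - (n + j) : ℕ) : ℂ)⁻¹ •
      ∑ C' ∈ univ.filter (fun C' : {C' : Finset (Fin v) // C'.card = j+1} => C.1 ⊆ C'.1),
        vvec v n (j+1) C' := by
    rw [← h, smul_smul, inv_mul_cancel₀ hk, one_smul]
  rw [h2]
  exact Submodule.smul_mem _ _
    (Submodule.sum_mem _ fun C' _ => Submodule.subset_span ⟨C', rfl⟩)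



theorem stmt_18 (v n i : ℕ) (hv : 2 * n ≤ v) (hi : i ≤ n) :
    LinearIndependent ℂ (vvec v n i) ∧
    Module.finrank ℂ
      ↥(Submodule.span ℂ (Set.range (vvec v n i)) ⊓
        (Submodule.span ℂ (Set.range (vvec v n (i - 1))))ᗮ) =
      v.choose i - v.choose (i - 1) := by
  have hli : LinearIndependent ℂ (vvec v n i) := li_vvec v n i hv hi
  refine ⟨hli, ?_⟩
  have hUV : Submodule.span ℂ (Set.range (vvec v n (i-1)))
      ≤ Submodule.span ℂ (Set.range (vvec v n i)) := by
    rcases Nat.eq_zero_or_pos i with h0 | hpos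
    · subst h0; exact le_rfl
    · obtain ⟨j, rfl⟩ : ∃ j, i = j + 1 := ⟨i - 1, by omega⟩
      rw [Submodule.span_le]
      rintro x ⟨C, rfl⟩
      have h := vvec_mem_span v n j hv (by omega) (by simpa using C)
      simpa using h
  have hliU : LinearIndependent ℂ (vvec v n (i-1)) := li_vvec v n (i-1) hv (by omega)
  have hV : Module.finrank ℂ (Submodule.span ℂ (Set.range (vvec v n i))) = v.choose i := by
    rw [finrank_span_eq_card hli]
    rw [Fintype.card_finset_len, Fintype.card_fin]
  have hU : Module.finrank ℂ (Submodule.span ℂ (Set.range (vvec v n (i-1))))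
      = v.choose (i-1) := by
    rw [finrank_span_eq_card hliU]
    rw [Fintype.card_finset_len, Fintype.card_fin]
  have hmono : v.choose (i-1) ≤ v.choose i := by
    rcases Nat.eq_zero_or_pos i with h0 | hpos
    · subst h0; exact le_rfl
    · obtain ⟨j, rfl⟩ : ∃ j, i = j + 1 := ⟨i - 1, by omega⟩
      simp only [Nat.add_sub_cancel]
      apply Nat.choose_le_succ_of_lt_half_left
      have h2 : (j + 1) * 2 ≤ v := by omega
      have := (Nat.le_div_iff_mul_le (by norm_num : 0 < 2)).2 h2
      omega
  have hfin := Submodule.finrank_add_inf_finrank_orthogonal'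
    (𝕜 := ℂ) hUV (n := v.choose i - v.choose (i-1)) (by rw [hU, hV]; omega)
  rw [inf_comm] at hfin
  exact hfin
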